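/- Let μ ≥ 2 be an integer, define g(s) = ((μ − 1)/μ)·Σ_{i=0}^∞ s^{μ^i}/μ^i and γ(s) = (1 − g(s))/(1 − s) for s ∈ [0,1). Then the sequence n ↦ γ(e^{−μ^{−n}}) − n·(μ − 1)/μ converges to a finite limit as n → ∞ through the natural numbers. -/

import Mathlib

open Filter Topology

theorem stmt_14 (μ : ℕ) (hμ : 2 ≤ μ) (g γ : ℝ → ℝ)
    (hg : ∀ s, g s = ((μ : ℝ) - 1) / μ * ∑' i : ℕ, s ^ (μ ^ i) / (μ : ℝ) ^ i)
    (hγ : ∀ s, γ s = (1 - g s) / (1 - s)) :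
    ∃ ℓ : ℝ, Tendsto (fun n : ℕ => γ (Real.exp (-((μ : ℝ) ^ n)⁻¹)) - n * ((μ : ℝ) - 1) / μ)
      atTop (𝓝 ℓ) := by
  have hμR : (2 : ℝ) ≤ (μ : ℝ) := by exact_mod_cast hμ
  have hμ0 : (0 : ℝ) < μ := by linarith
  have hμ1 : (1 : ℝ) < μ := by linarith
  have hinv0 : (0:ℝ) ≤ (μ:ℝ)⁻¹ := by positivity
  have hinv1 : (μ:ℝ)⁻¹ < 1 := by rw [inv_lt_one_iff₀]; right; exact hμ1
  set x : ℕ → ℝ := fun n => ((μ : ℝ) ^ n)⁻¹ with hxdef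
  set s : ℕ → ℝ := fun n => Real.exp (-x n) with hsdef
  have hxpos : ∀ n, 0 < x n := fun n => by positivity
  have hxle1 : ∀ n, x n ≤ 1 := fun n => by
    rw [hxdef]
    simp only
    rw [inv_le_one_iff₀]
    right; exact one_le_pow₀ (by linarith)
  have hspos : ∀ n, 0 < s n := fun n => Real.exp_pos _
  have hslt1 : ∀ n, s n < 1 := fun n => by
    rw [hsdef]; simp only
    rw [Real.exp_lt_one_iff]; linarith [hxpos n]
  have hssucc : ∀ n, (s (n + 1)) ^ μ = s n := by
    intro n
    rw [hsdef]; simp only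
    rw [← Real.exp_nat_mul]
    congr 1
    rw [hxdef]; simp only
    rw [pow_succ]
    field_simp
  -- summability
  have hsum : ∀ t : ℝ, 0 ≤ t → t ≤ 1 →
      Summable (fun i : ℕ => t ^ (μ ^ i) / (μ : ℝ) ^ i) := by
    intro t ht0 ht1
    apply Summable.of_nonneg_of_le (fun i => by positivity)
      (fun i => ?_) (summable_geometric_of_lt_one hinv0 hinv1)
    rw [div_le_iff₀ (by positivity), inv_pow, inv_mul_cancel₀ (by positivity)]
    exact pow_le_one₀ ht0 ht1
  -- geometric sum value
  have hgeo : ∑' i : ℕ, ((μ : ℝ)⁻¹) ^ i = (1 - (μ:ℝ)⁻¹)⁻¹ :=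
    tsum_geometric_of_lt_one hinv0 hinv1
  -- g bounds
  have hgle1 : ∀ t : ℝ, 0 ≤ t → t ≤ 1 → g t ≤ 1 := by
    intro t ht0 ht1
    rw [hg]
    have h1 : ∑' i : ℕ, t ^ (μ ^ i) / (μ : ℝ) ^ i ≤ ∑' i : ℕ, ((μ : ℝ)⁻¹) ^ i := by
      apply Summable.tsum_le_tsum _ (hsum t ht0 ht1) (summable_geometric_of_lt_one hinv0 hinv1)
      intro i
      rw [div_le_iff₀ (by positivity), inv_pow, inv_mul_cancel₀ (by positivity)]
      exact pow_le_one₀ ht0 ht1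
    rw [hgeo] at h1
    have hμm1 : (μ:ℝ) - 1 ≠ 0 := by linarith
    calc ((μ:ℝ) - 1) / μ * ∑' i : ℕ, t ^ (μ ^ i) / (μ : ℝ) ^ i
        ≤ ((μ:ℝ) - 1) / μ * (1 - (μ:ℝ)⁻¹)⁻¹ := by
          apply mul_le_mul_of_nonneg_left h1 (div_nonneg (by linarith) (by linarith))
      _ = 1 := by
          rw [inv_eq_one_div]
          field_simp
  -- functional equation
  have hfe : ∀ t : ℝ, 0 ≤ t → t ≤ 1 → g t = ((μ:ℝ) - 1) / μ * t + g (t ^ μ) / μ := by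
    intro t ht0 ht1
    rw [hg, hg]
    have hS := hsum t ht0 ht1
    rw [Summable.tsum_eq_zero_add hS]
    have h2 : ∀ i : ℕ, t ^ (μ ^ (i + 1)) / (μ : ℝ) ^ (i + 1)
        = ((t ^ μ) ^ (μ ^ i) / (μ : ℝ) ^ i) * (μ:ℝ)⁻¹ := by
      intro i
      rw [pow_succ' μ i, pow_mul, pow_succ (μ:ℝ) i]
      rw [div_mul_eq_div_div_swap]
      ring
    simp_rw [h2]
    rw [tsum_mul_right]
    rw [pow_zero, pow_one]
    ring
  -- key recursion for γ
  have hkey : ∀ n, γ (s (n + 1)) =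
      (1 - s n) / ((μ : ℝ) * (1 - s (n + 1))) * γ (s n) + ((μ:ℝ) - 1) / μ := by
    intro n
    have h1 : g (s (n + 1)) = ((μ:ℝ) - 1) / μ * s (n + 1) + g (s n) / μ := by
      have := hfe (s (n + 1)) (hspos (n+1)).le (hslt1 (n+1)).le
      rwa [hssucc n] at this
    rw [hγ, hγ, h1]
    have hne1 : (1 : ℝ) - s (n + 1) ≠ 0 := by linarith [hslt1 (n+1)]
    have hne2 : (1 : ℝ) - s n ≠ 0 := by linarith [hslt1 n]
    field_simp
    ring
  -- nonnegativity of γ at s n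
  have hγpos : ∀ n, 0 ≤ γ (s n) := by
    intro n
    rw [hγ]
    apply div_nonneg
    · linarith [hgle1 (s n) (hspos n).le (hslt1 n).le]
    · linarith [hslt1 n]
  -- ratio ≤ 1 : 1 - s n ≤ μ (1 - s (n+1))
  have hratio_le : ∀ n, 1 - s n ≤ (μ : ℝ) * (1 - s (n + 1)) := by
    intro n
    have hb := one_add_mul_le_pow (a := s (n+1) - 1) (by linarith [hspos (n+1)]) μ
    rw [add_sub_cancel] at hb
    rw [hssucc n] at hb
    nlinarith
  have hrle1 : ∀ n, (1 - s n) / ((μ : ℝ) * (1 - s (n + 1))) ≤ 1 := by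
    intro n
    have hne1 : (0:ℝ) < 1 - s (n + 1) := by linarith [hslt1 (n+1)]
    rw [div_le_one (by positivity)]
    exact hratio_le n
  have hr0 : ∀ n, 0 ≤ (1 - s n) / ((μ : ℝ) * (1 - s (n + 1))) := by
    intro n
    have hne1 : (0:ℝ) < 1 - s (n + 1) := by linarith [hslt1 (n+1)]
    apply div_nonneg (by linarith [hslt1 n]) (by positivity)
  -- γ growth bound
  have hγbd : ∀ n, γ (s n) ≤ γ (s 0) + n := by
    intro n
    induction n with
    | zero => simp
    | succ k ih =>
      have h3 : ((μ:ℝ) - 1) / μ ≤ 1 := by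
        rw [div_le_one hμ0]; linarith
      push_cast
      calc γ (s (k+1)) = (1 - s k) / ((μ : ℝ) * (1 - s (k + 1))) * γ (s k) + ((μ:ℝ) - 1) / μ :=
            hkey k
        _ ≤ 1 * γ (s k) + 1 := by
            gcongr
            · exact hγpos k
            · exact hrle1 k
        _ ≤ γ (s 0) + (k + 1) := by push_cast; linarith
  -- exp bounds
  have hexp_le : ∀ y : ℝ, 0 ≤ y → 1 - Real.exp (-y) ≤ y := by
    intro y hy
    have := Real.add_one_le_exp (-y)
    linarith
  have hexp_ge : ∀ y : ℝ, 0 ≤ y → y / (1 + y) ≤ 1 - Real.exp (-y) := by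
    intro y hy
    have h1 : 1 + y ≤ Real.exp y := by linarith [Real.add_one_le_exp y]
    have h2 : Real.exp (-y) ≤ (1 + y)⁻¹ := by
      rw [Real.exp_neg]
      exact inv_anti₀ (by linarith) h1
    have h3 : (1 + y)⁻¹ = 1 - y / (1 + y) := by field_simp; ring
    linarith [h2.trans_eq h3]
  -- numerator bound
  have hnum : ∀ n, (μ : ℝ) * (1 - s (n + 1)) - (1 - s n) ≤ (μ:ℝ)^2 * (x (n + 1))^2 := by
    intro n
    set y := x (n + 1) with hy
    have hy0 : 0 < y := hxpos (n + 1)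
    have h1 : 1 - s (n + 1) ≤ y := hexp_le y hy0.le
    have hsn : s n = Real.exp (-((μ:ℝ) * y)) := by
      rw [← hssucc n, hsdef]
      simp only
      rw [← Real.exp_nat_mul]
      congr 1; ring
    have h2 : ((μ:ℝ) * y) / (1 + (μ:ℝ) * y) ≤ 1 - s n := by
      rw [hsn]; exact hexp_ge _ (by positivity)
    have h3 : (μ:ℝ) * y - ((μ:ℝ) * y) / (1 + (μ:ℝ) * y) ≤ (μ:ℝ)^2 * y^2 := by
      have he : (μ:ℝ) * y - ((μ:ℝ) * y) / (1 + (μ:ℝ) * y) = (μ:ℝ)^2*y^2 / (1 + (μ:ℝ)*y) := by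
        field_simp
        ring
      rw [he, div_le_iff₀ (by positivity)]
      nlinarith [mul_pos (mul_pos (pow_pos hμ0 2) (pow_pos hy0 2)) (mul_pos hμ0 hy0)]
    nlinarith
  -- denominator lower bound
  have hden : ∀ n, (μ:ℝ) * x (n + 1) / 2 ≤ (μ : ℝ) * (1 - s (n + 1)) := by
    intro n
    have hy0 : 0 < x (n + 1) := hxpos (n + 1)
    have hy1 : x (n + 1) ≤ 1 := hxle1 (n + 1)
    have h2 := hexp_ge (x (n + 1)) hy0.le
    have h3 : x (n + 1) / 2 ≤ x (n + 1) / (1 + x (n + 1)) := by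
      apply div_le_div_of_nonneg_left hy0.le (by positivity) (by linarith)
    have h4 : x (n+1) / 2 ≤ 1 - s (n + 1) := h3.trans h2
    calc (μ:ℝ) * x (n + 1) / 2 = (μ:ℝ) * (x (n+1) / 2) := by ring
      _ ≤ (μ : ℝ) * (1 - s (n + 1)) := by
          apply mul_le_mul_of_nonneg_left h4 (by positivity)
  -- ratio near 1
  have hrerr : ∀ n, 1 - (1 - s n) / ((μ : ℝ) * (1 - s (n + 1))) ≤ 2 * ((μ:ℝ)⁻¹) ^ n := by
    intro n
    have hne1 : (0:ℝ) < 1 - s (n + 1) := by linarith [hslt1 (n+1)]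
    have hD : (0:ℝ) < (μ : ℝ) * (1 - s (n + 1)) := by positivity
    have h1 : 1 - (1 - s n) / ((μ : ℝ) * (1 - s (n + 1)))
        = ((μ : ℝ) * (1 - s (n + 1)) - (1 - s n)) / ((μ : ℝ) * (1 - s (n + 1))) := by
      field_simp
    rw [h1]
    have hy0 : 0 < x (n + 1) := hxpos (n + 1)
    calc ((μ : ℝ) * (1 - s (n + 1)) - (1 - s n)) / ((μ : ℝ) * (1 - s (n + 1)))
        ≤ ((μ:ℝ)^2 * (x (n + 1))^2) / ((μ:ℝ) * x (n + 1) / 2) := by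
          apply div_le_div₀ (by positivity) (hnum n) (by positivity) (hden n)
      _ = 2 * ((μ:ℝ) * x (n + 1)) := by
          field_simp
      _ = 2 * ((μ:ℝ)⁻¹) ^ n := by
          rw [hxdef]
          simp only
          rw [pow_succ, inv_pow]
          rw [mul_inv]
          field_simp
  -- the sequence
  set F : ℕ → ℝ := fun n => γ (Real.exp (-((μ : ℝ) ^ n)⁻¹)) - n * ((μ : ℝ) - 1) / μ with hF
  have hdist : ∀ n, dist (F n) (F (n+1)) ≤ (γ (s 0) + n) * (2 * ((μ:ℝ)⁻¹) ^ n) := by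
    intro n
    rw [Real.dist_eq]
    have e1 : F n - F (n+1)
        = (1 - (1 - s n) / ((μ : ℝ) * (1 - s (n + 1)))) * γ (s n) := by
      show (γ (s n) - ↑n * ((μ:ℝ)-1)/μ) - (γ (s (n+1)) - ↑(n+1) * ((μ:ℝ)-1)/μ) = _
      rw [hkey n]; push_cast; ring
    rw [e1, abs_of_nonneg (mul_nonneg (by linarith [hrle1 n]) (hγpos n))]
    calc (1 - (1 - s n) / ((μ : ℝ) * (1 - s (n + 1)))) * γ (s n)
        ≤ (2 * ((μ:ℝ)⁻¹) ^ n) * (γ (s 0) + n) := by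
          apply mul_le_mul (hrerr n) (hγbd n) (hγpos n) (by positivity)
      _ = (γ (s 0) + n) * (2 * ((μ:ℝ)⁻¹) ^ n) := by ring
  have hsd : Summable (fun n : ℕ => (γ (s 0) + n) * (2 * ((μ:ℝ)⁻¹) ^ n)) := by
    have h1 : Summable (fun n : ℕ => ((μ:ℝ)⁻¹) ^ n) := summable_geometric_of_lt_one hinv0 hinv1
    have h2 : Summable (fun n : ℕ => (n:ℝ) * ((μ:ℝ)⁻¹) ^ n) := by
      have := summable_pow_mul_geometric_of_norm_lt_one 1 (r := (μ:ℝ)⁻¹)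
        (by rw [Real.norm_eq_abs, abs_of_nonneg hinv0]; exact hinv1)
      simpa using this
    have h3 := (h1.mul_left (2 * γ (s 0))).add (h2.mul_left 2)
    exact h3.congr (fun n => by ring)
  have hc : CauchySeq F := cauchySeq_of_dist_le_of_summable _ hdist hsd
  exact cauchySeq_tendsto_of_complete hc
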